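/- For every n ≥ 1, the alternating group A_n has an ordered generating system. -/

import Mathlib

/-- `(a, m)` is an *ordered generating system* of the group `G` if every `m k` is positive
and every `g : G` has a unique representation `g = a 0 ^ i 0 * a 1 ^ i 1 * ⋯ * a (n-1) ^ i (n-1)`
with `0 ≤ i k < m k` for all `k`. -/
def IsOGS {G : Type*} [Group G] {n : ℕ} (a : Fin n → G) (m : Fin n → ℕ) : Prop :=
  (∀ k, 0 < m k) ∧
    ∀ g : G, ∃! i : (k : Fin n) → Fin (m k),
      g = (List.ofFn fun k => a k ^ ((i k : ℕ))).prod

/-- A group `G` has an ordered generating system if some tuple of elements together with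
some bounds forms one. -/
def HasOGS (G : Type*) [Group G] : Prop :=
  ∃ (n : ℕ) (a : Fin n → G) (m : Fin n → ℕ), IsOGS a m

namespace OGSaux

open Equiv Function
open Fin.NatCast

lemma isOGS_cons {G H : Type*} [Group G] [Group H] (φ : H →* G) (a : G) (m : ℕ) (hm : 0 < m)
    (hbij : Function.Bijective (fun p : Fin m × H => a ^ ((p.1 : ℕ)) * φ p.2))
    {r : ℕ} {b : Fin r → H} {mb : Fin r → ℕ} (hb : IsOGS b mb) :
    IsOGS (Fin.cons a (fun k => φ (b k)) : Fin (r+1) → G)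
      (Fin.cons m mb : Fin (r+1) → ℕ) := by
  obtain ⟨hmb, hrep⟩ := hb
  constructor
  · intro k
    induction k using Fin.cases with
    | zero => simpa using hm
    | succ k => simpa using hmb k
  · intro g
    have key : ∀ i : (k : Fin (r+1)) → Fin ((Fin.cons m mb : Fin (r+1) → ℕ) k),
        (List.ofFn fun k => (Fin.cons a (fun k => φ (b k)) : Fin (r+1) → G) k ^ ((i k : ℕ))).prod
          = a ^ ((i 0 : ℕ)) * φ (List.ofFn fun k => b k ^ (((i k.succ) : ℕ))).prod := by
      intro i
      rw [List.ofFn_succ]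
      simp only [Fin.cons_zero, Fin.cons_succ, List.prod_cons]
      congr 1
      rw [map_list_prod, List.map_ofFn]
      simp [Function.comp_def, map_pow]
    obtain ⟨⟨i0, h⟩, hgh, huniq⟩ := hbij.existsUnique g
    obtain ⟨itail, hit, hituniq⟩ := hrep h
    refine ⟨Fin.cons i0 itail, ?_, ?_⟩
    · show g = _
      rw [key]
      show g = a ^ ((i0 : ℕ)) * φ (List.ofFn fun k => b k ^ ((itail k : ℕ))).prod
      rw [← hit]
      exact hgh.symm
    · intro j hj
      have hj' : g = a ^ ((j 0 : ℕ)) * φ (List.ofFn fun k => b k ^ (((j k.succ) : ℕ))).prod := by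
        rw [← key j]; exact hj
      have h2 := huniq (j 0, (List.ofFn fun k => b k ^ (((j k.succ) : ℕ))).prod) hj'.symm
      have hj0 : j 0 = i0 := congrArg Prod.fst h2
      have hjt : (List.ofFn fun k => b k ^ (((j k.succ) : ℕ))).prod = h := congrArg Prod.snd h2
      have htail : (fun k : Fin r => j k.succ) = itail := hituniq (fun k : Fin r => j k.succ) hjt.symm
      refine funext fun k => Fin.cases ?_ ?_ k
      · exact hj0
      · exact fun k' => congrFun htail k'

lemma isOGS_cons2 {G H : Type*} [Group G] [Group H] (φ : H →* G) (a b : G) (m1 m2 : ℕ)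
    (hm1 : 0 < m1) (hm2 : 0 < m2)
    (hbij : Function.Bijective
      (fun p : Fin m1 × Fin m2 × H => a ^ ((p.1 : ℕ)) * b ^ ((p.2.1 : ℕ)) * φ p.2.2))
    {r : ℕ} {c : Fin r → H} {mc : Fin r → ℕ} (hc : IsOGS c mc) :
    IsOGS (Fin.cons a (Fin.cons b (fun k => φ (c k))) : Fin (r+2) → G)
      (Fin.cons m1 (Fin.cons m2 mc) : Fin (r+2) → ℕ) := by
  obtain ⟨hmc, hrep⟩ := hc
  constructor
  · intro k
    refine Fin.cases ?_ (fun k' => ?_) k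
    · simpa using hm1
    · refine Fin.cases ?_ (fun k'' => ?_) k'
      · simpa using hm2
      · simpa using hmc k''
  · intro g
    have key : ∀ i : (k : Fin (r+2)) → Fin ((Fin.cons m1 (Fin.cons m2 mc) : Fin (r+2) → ℕ) k),
        (List.ofFn fun k =>
            (Fin.cons a (Fin.cons b (fun k => φ (c k))) : Fin (r+2) → G) k ^ ((i k : ℕ))).prod
          = a ^ ((i 0 : ℕ)) * b ^ ((i (Fin.succ 0) : ℕ)) *
              φ (List.ofFn fun k => c k ^ (((i k.succ.succ) : ℕ))).prod := by
      intro i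
      rw [List.ofFn_succ, List.ofFn_succ]
      simp only [Fin.cons_zero, Fin.cons_succ, List.prod_cons]
      rw [← mul_assoc]
      congr 1
      rw [map_list_prod, List.map_ofFn]
      simp [Function.comp_def, map_pow]
    obtain ⟨⟨i0, j0, h⟩, hgh, huniq⟩ := hbij.existsUnique g
    obtain ⟨itail, hit, hituniq⟩ := hrep h
    refine ⟨Fin.cons i0 (Fin.cons j0 itail), ?_, ?_⟩
    · show g = _
      rw [key]
      show g = a ^ ((i0 : ℕ)) * b ^ ((j0 : ℕ)) * φ (List.ofFn fun k => c k ^ ((itail k : ℕ))).prod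
      rw [← hit]
      exact hgh.symm
    · intro j hj
      have hj' : g = a ^ ((j 0 : ℕ)) * b ^ ((j (Fin.succ 0) : ℕ)) *
          φ (List.ofFn fun k => c k ^ (((j k.succ.succ) : ℕ))).prod := by
        rw [← key j]; exact hj
      have h2 := huniq (j 0, j (Fin.succ 0),
        (List.ofFn fun k => c k ^ (((j k.succ.succ) : ℕ))).prod) hj'.symm
      have hj0 : j 0 = i0 := congrArg Prod.fst h2
      have h2' := congrArg Prod.snd h2
      have hj1 : j (Fin.succ 0) = j0 := congrArg Prod.fst h2'
      have hjt : (List.ofFn fun k => c k ^ (((j k.succ.succ) : ℕ))).prod = h :=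
        congrArg Prod.snd h2'
      have htail : (fun k : Fin r => j k.succ.succ) = itail :=
        hituniq (fun k : Fin r => j k.succ.succ) hjt.symm
      refine funext fun k => Fin.cases ?_ (fun k' => ?_) k
      · exact hj0
      · refine Fin.cases ?_ (fun k'' => ?_) k'
        · exact hj1
        · exact congrFun htail k''

theorem finRotate_pow_apply {n : ℕ} (t : ℕ) (x : Fin (n + 1)) :
    ((finRotate (n + 1)) ^ t) x = x + ↑t := by
  induction t generalizing x with
  | zero => simp
  | succ t ih =>
    rw [pow_succ', Equiv.Perm.mul_apply, finRotate_succ_apply, ih, Nat.cast_add, Nat.cast_one]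
    abel

lemma hasOGS_of_subsingleton (G : Type*) [Group G] [Subsingleton G] : HasOGS G := by
  refine ⟨0, Fin.elim0, Fin.elim0, fun k => k.elim0, fun g => ⟨fun k => k.elim0, ?_, ?_⟩⟩
  · simp [Subsingleton.elim g 1]
  · intro y _
    funext k
    exact k.elim0

lemma subsingleton_A2 : Subsingleton (alternatingGroup (Fin 2)) := by
  have h1 := two_mul_card_alternatingGroup (α := Fin 2)
  rw [Fintype.card_perm, Fintype.card_fin] at h1
  have h2 : Nat.factorial 2 = 2 := rfl
  exact Fintype.card_le_one_iff_subsingleton.mp (by omega)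

/-- The equivalence between `Fin N` and the initial segment of `Fin (N+1)`. -/
def castEquiv (N : ℕ) : Fin N ≃ {i : Fin (N + 1) // (i : ℕ) < N} where
  toFun k := ⟨k.castSucc, by simpa using k.isLt⟩
  invFun k := ⟨(k : Fin (N + 1)).val, k.2⟩
  left_inv k := by ext; simp
  right_inv k := by ext; simp

/-- Embedding of `A_N` into `A_{N+1}`, fixing the last point. -/
def phi (N : ℕ) : alternatingGroup (Fin N) →* alternatingGroup (Fin (N + 1)) :=
  MonoidHom.codRestrict
    ((Equiv.Perm.extendDomainHom (castEquiv N)).comp (alternatingGroup (Fin N)).subtype)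
    (alternatingGroup (Fin (N + 1)))
    (fun σ => by
      rw [Equiv.Perm.mem_alternatingGroup]
      show Equiv.Perm.sign ((σ : Equiv.Perm (Fin N)).extendDomain (castEquiv N)) = 1
      rw [Equiv.Perm.sign_extendDomain]
      exact Equiv.Perm.mem_alternatingGroup.mp σ.2)

lemma phi_val (N : ℕ) (σ : alternatingGroup (Fin N)) :
    ((phi N σ : alternatingGroup (Fin (N + 1))) : Equiv.Perm (Fin (N + 1)))
      = (σ : Equiv.Perm (Fin N)).extendDomain (castEquiv N) := rfl

lemma phi_last (N : ℕ) (σ : alternatingGroup (Fin N)) :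
    ((phi N σ : alternatingGroup (Fin (N + 1))) : Equiv.Perm (Fin (N + 1))) (Fin.last N)
      = Fin.last N := by
  rw [phi_val]
  exact Equiv.Perm.extendDomain_apply_not_subtype _ _ (by simp)

lemma phi_inj (N : ℕ) : Function.Injective (phi N) := by
  intro x y hxy
  have h : ((phi N x : alternatingGroup (Fin (N+1))) : Equiv.Perm (Fin (N+1)))
      = ((phi N y : alternatingGroup (Fin (N+1))) : Equiv.Perm (Fin (N+1))) := by rw [hxy]
  rw [phi_val, phi_val] at h
  exact Subtype.ext (Equiv.Perm.extendDomainHom_injective (castEquiv N) h)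

lemma card_succ (N : ℕ) (hN : 2 ≤ N) :
    Fintype.card (alternatingGroup (Fin (N + 1)))
      = (N + 1) * Fintype.card (alternatingGroup (Fin N)) := by
  haveI : Nontrivial (Fin N) := Fin.nontrivial_iff_two_le.mpr hN
  haveI : Nontrivial (Fin (N + 1)) := Fin.nontrivial_iff_two_le.mpr (by omega)
  have h1 : 2 * Fintype.card (alternatingGroup (Fin N)) = Nat.factorial N := by
    rw [two_mul_card_alternatingGroup, Fintype.card_perm, Fintype.card_fin]
  have h2 : 2 * Fintype.card (alternatingGroup (Fin (N + 1))) = Nat.factorial (N + 1) := by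
    rw [two_mul_card_alternatingGroup, Fintype.card_perm, Fintype.card_fin]
  have h3 : Nat.factorial (N + 1) = (N + 1) * Nat.factorial N := Nat.factorial_succ N
  refine Nat.eq_of_mul_eq_mul_left (show 0 < 2 by norm_num) ?_
  rw [h2, h3, ← h1]
  ring


lemma step_odd (N : ℕ) (hN : 2 ≤ N) (hpar : Even N)
    (ih : HasOGS (alternatingGroup (Fin N))) : HasOGS (alternatingGroup (Fin (N + 1))) := by
  obtain ⟨r, b, mb, hb⟩ := ih
  have ha : finRotate (N + 1) ∈ alternatingGroup (Fin (N + 1)) := by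
    rw [Equiv.Perm.mem_alternatingGroup, sign_finRotate]
    exact Even.neg_one_pow hpar
  set a : alternatingGroup (Fin (N + 1)) := ⟨finRotate (N + 1), ha⟩ with ha_def
  have hinj : Injective (fun p : Fin (N + 1) × alternatingGroup (Fin N) =>
      a ^ ((p.1 : ℕ)) * phi N p.2) := by
    rintro ⟨i, h⟩ ⟨i', h'⟩ heq
    simp only at heq
    have E : (finRotate (N+1)) ^ ((i:ℕ)) * ((phi N h : _) : Equiv.Perm (Fin (N+1)))
        = (finRotate (N+1)) ^ ((i':ℕ)) * ((phi N h' : _) : Equiv.Perm (Fin (N+1))) := by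
      have h2 := congrArg
        (fun z : alternatingGroup (Fin (N+1)) => (z : Equiv.Perm (Fin (N+1)))) heq
      simpa [ha_def] using h2
    have Eapp := congrArg (fun σ : Equiv.Perm (Fin (N+1)) => σ (Fin.last N)) E
    simp only [Equiv.Perm.mul_apply, phi_last, finRotate_pow_apply] at Eapp
    have hii : i = i' := by
      have h3 := add_left_cancel Eapp
      rwa [Fin.cast_val_eq_self, Fin.cast_val_eq_self] at h3
    subst hii
    have h4 : phi N h = phi N h' := mul_left_cancel heq
    exact Prod.ext rfl (phi_inj N h4)
  have hcard : Fintype.card (Fin (N + 1) × alternatingGroup (Fin N))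
      = Fintype.card (alternatingGroup (Fin (N + 1))) := by
    rw [Fintype.card_prod, Fintype.card_fin, card_succ N hN]
  have hbij := (Fintype.bijective_iff_injective_and_card _).mpr ⟨hinj, hcard⟩
  exact ⟨r + 1, _, _, isOGS_cons (phi N) a (N + 1) (by omega) hbij hb⟩


lemma step_even (N m : ℕ) (hm : N + 1 = 2 * m) (hm2 : 2 ≤ m)
    (ih : HasOGS (alternatingGroup (Fin N))) : HasOGS (alternatingGroup (Fin (N + 1))) := by
  obtain ⟨r, cc, mc, hcc⟩ := ih
  have hN3 : 3 ≤ N := by omega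
  have hNodd : N % 2 = 1 := by omega
  have hval2 : ((2 : Fin (N + 1)) : ℕ) = 2 := by
    rw [show (2 : Fin (N+1)) = ((2 : ℕ) : Fin (N+1)) by norm_cast]
    exact Fin.val_cast_of_lt (by omega)
  have h02 : (0 : Fin (N + 1)) ≠ 2 := by
    intro h
    have := congrArg Fin.val h
    rw [hval2] at this
    simp at this
  -- the two permutations
  set c₀ : Equiv.Perm (Fin (N + 1)) := finRotate (N + 1) ^ 2 with hc₀
  set b₀ : Equiv.Perm (Fin (N + 1)) := Equiv.swap (0 : Fin (N+1)) 2 * finRotate (N + 1) with hb₀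
  have hcmem : c₀ ∈ alternatingGroup (Fin (N + 1)) := by
    rw [Equiv.Perm.mem_alternatingGroup, map_pow, Int.units_sq]
  have hbmem : b₀ ∈ alternatingGroup (Fin (N + 1)) := by
    rw [Equiv.Perm.mem_alternatingGroup, map_mul, Equiv.Perm.sign_swap h02, sign_finRotate, Nat.add_sub_cancel,
      Odd.neg_one_pow (Nat.odd_iff.mpr hNodd)]
    decide
  set c : alternatingGroup (Fin (N + 1)) := ⟨c₀, hcmem⟩ with hc_def
  set b : alternatingGroup (Fin (N + 1)) := ⟨b₀, hbmem⟩ with hb_def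
  -- value computations
  have hval2j : ∀ j : Fin m, ((↑(2 * (j : ℕ)) : Fin (N + 1)) : ℕ) = 2 * (j : ℕ) := by
    intro j
    exact Fin.val_cast_of_lt (by omega)
  have wv0 : ∀ j : Fin m, (c₀ ^ ((j : ℕ))) (Fin.last N) = Fin.last N + ↑(2 * (j : ℕ)) := by
    intro j
    rw [hc₀, ← pow_mul, finRotate_pow_apply]
  have val0 : ∀ j : Fin m, ((Fin.last N + ↑(2 * (j : ℕ)) : Fin (N + 1))).val
      = (N + 2 * (j : ℕ)) % (N + 1) := by
    intro j
    rw [Fin.add_def, Fin.val_last, hval2j]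
  have val1 : ∀ j : Fin m, ((Fin.last N + ↑(2 * (j : ℕ)) + 1 : Fin (N + 1))).val
      = 2 * (j : ℕ) := by
    intro j
    have e1 : (↑(2 * (j : ℕ)) : Fin (N + 1)) + 1 = (↑(2 * (j : ℕ) + 1) : Fin (N + 1)) := by
      push_cast; ring
    rw [add_assoc, e1, Fin.add_def, Fin.val_last,
      Fin.val_cast_of_lt (show 2*(j:ℕ)+1 < N+1 by omega)]
    show (N + (2 * (j:ℕ) + 1)) % (N + 1) = 2 * (j:ℕ)
    rw [show N + (2 * (j:ℕ) + 1) = 2 * (j:ℕ) + (N + 1) by omega, Nat.add_mod_right]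
    exact Nat.mod_eq_of_lt (by omega)
  have hswap_par : ∀ x : Fin (N + 1),
      ((Equiv.swap (0 : Fin (N+1)) 2 x) : ℕ) % 2 = (x : ℕ) % 2 := by
    intro x
    rcases eq_or_ne x 0 with rfl | h0
    · rw [Equiv.swap_apply_left, hval2]
      simp
    rcases eq_or_ne x 2 with rfl | h2
    · rw [Equiv.swap_apply_right, hval2]
      simp
    · rw [Equiv.swap_apply_of_ne_of_ne h0 h2]
  -- parity of the values
  have hpar : ∀ (i : Fin 2) (j : Fin m),
      (((b₀ ^ ((i : ℕ))) ((c₀ ^ ((j : ℕ))) (Fin.last N))) : ℕ) % 2 = (1 + (i : ℕ)) % 2 := by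
    intro i j
    fin_cases i
    · simp only [Fin.val_zero, pow_zero, Equiv.Perm.one_apply]
      rw [wv0, val0, Nat.mod_mod_of_dvd _ ⟨m, hm⟩]
      omega
    · simp only [Fin.val_one, pow_one]
      rw [wv0, hb₀, Equiv.Perm.mul_apply, finRotate_succ_apply, hswap_par, val1]
      omega
  -- injectivity of the value map
  have hvinj : ∀ (i i' : Fin 2) (j j' : Fin m),
      (b₀ ^ ((i : ℕ))) ((c₀ ^ ((j : ℕ))) (Fin.last N))
        = (b₀ ^ ((i' : ℕ))) ((c₀ ^ ((j' : ℕ))) (Fin.last N)) → i = i' ∧ j = j' := by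
    intro i i' j j' hE
    have hpi := hpar i j
    have hpi' := hpar i' j'
    rw [hE] at hpi
    have hii : i = i' := by
      have h5 : (1 + (i : ℕ)) % 2 = (1 + (i' : ℕ)) % 2 := hpi.symm.trans hpi'
      have hi2 := i.isLt
      have hi'2 := i'.isLt
      exact Fin.ext (by omega)
    subst hii
    refine ⟨rfl, ?_⟩
    have hinner : (c₀ ^ ((j : ℕ))) (Fin.last N) = (c₀ ^ ((j' : ℕ))) (Fin.last N) := by
      fin_cases i
      · simpa [pow_zero] using hE
      · simp only [Fin.val_one, pow_one] at hE
        exact b₀.injective hE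
    rw [wv0, wv0] at hinner
    have h6 := add_left_cancel hinner
    have h7 := congrArg Fin.val h6
    rw [hval2j, hval2j] at h7
    exact Fin.ext (by omega)
  -- injectivity of the full map
  have hinj : Injective (fun p : Fin 2 × Fin m × alternatingGroup (Fin N) =>
      b ^ ((p.1 : ℕ)) * c ^ ((p.2.1 : ℕ)) * phi N p.2.2) := by
    rintro ⟨i, j, h⟩ ⟨i', j', h'⟩ heq
    simp only at heq
    have E : b₀ ^ ((i : ℕ)) * (c₀ ^ ((j : ℕ)) * ((phi N h : _) : Equiv.Perm (Fin (N+1))))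
        = b₀ ^ ((i' : ℕ)) * (c₀ ^ ((j' : ℕ)) * ((phi N h' : _) : Equiv.Perm (Fin (N+1)))) := by
      have h2 := congrArg
        (fun z : alternatingGroup (Fin (N+1)) => (z : Equiv.Perm (Fin (N+1)))) heq
      simp only [Subgroup.coe_mul, SubgroupClass.coe_pow, hb_def, hc_def] at h2
      simpa [mul_assoc] using h2
    have Eapp := congrArg (fun σ : Equiv.Perm (Fin (N+1)) => σ (Fin.last N)) E
    simp only [Equiv.Perm.mul_apply, phi_last] at Eapp
    obtain ⟨hii, hjj⟩ := hvinj i i' j j' Eapp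
    subst hii; subst hjj
    have h4 : phi N h = phi N h' := mul_left_cancel heq
    rw [phi_inj N h4]
  -- cardinality
  have hcard : Fintype.card (Fin 2 × Fin m × alternatingGroup (Fin N))
      = Fintype.card (alternatingGroup (Fin (N + 1))) := by
    rw [Fintype.card_prod, Fintype.card_prod, Fintype.card_fin, Fintype.card_fin,
      card_succ N (by omega), hm]
    ring
  have hbij := (Fintype.bijective_iff_injective_and_card _).mpr ⟨hinj, hcard⟩
  exact ⟨r + 2, _, _, isOGS_cons2 (phi N) b c 2 m (by omega) (by omega) hbij hcc⟩


end OGSaux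

theorem hasOGS_alternatingGroup (n : ℕ) (hn : 1 ≤ n) :
    HasOGS (alternatingGroup (Fin n)) := by
  induction n with
  | zero => exact absurd hn (by omega)
  | succ N ih =>
    rcases Nat.lt_or_ge N 2 with h | h
    · interval_cases N
      · haveI : Subsingleton (Fin (0 + 1)) := ⟨fun a b => Fin.ext (by omega)⟩
        exact OGSaux.hasOGS_of_subsingleton _
      · haveI := OGSaux.subsingleton_A2
        exact OGSaux.hasOGS_of_subsingleton _
    · have ihN := ih (by omega)
      rcases Nat.even_or_odd N with hpar | hpar
      · exact OGSaux.step_odd N h hpar ihN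
      · obtain ⟨t, ht⟩ := hpar
        exact OGSaux.step_even N (t + 1) (by omega) (by omega) ihN
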